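/- Let g : ℝ² → ℝ be a smooth compactly supported function and c := exp∘g. Then ∫_{ℝ²} c⁻² |∇c|² Δc dx = −(2/3)∫_{ℝ²} c⁻¹ |D²c|² dx + (2/3)∫_{ℝ²} c⁻³ |∇c|⁴ dx + (2/3)∫_{ℝ²} c⁻¹ (Δc)² dx. -/

import Mathlib

open MeasureTheory Real Function

noncomputable section

/-- The plane `ℝ²` as a Euclidean space. -/
abbrev E2 : Type := EuclideanSpace ℝ (Fin 2)

/-- `i`-th partial derivative of a scalar function on `ℝ²`. -/
def pd (i : Fin 2) (f : E2 → ℝ) (x : E2) : ℝ :=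
  fderiv ℝ f x (EuclideanSpace.single i 1)

/-- Laplacian `Δf = ∑ i, ∂_i ∂_i f`. -/
def lap (f : E2 → ℝ) (x : E2) : ℝ := ∑ i, pd i (pd i f) x

/-- `|∇f|² = ∑ i, (∂_i f)²`. -/
def gradSq (f : E2 → ℝ) (x : E2) : ℝ := ∑ i, (pd i f x) ^ 2

/-- Squared Frobenius norm of the Hessian: `|D²f|² = ∑ i j, (∂²_{ij} f)²`. -/
def hessSq (f : E2 → ℝ) (x : E2) : ℝ := ∑ i, ∑ j, (pd i (pd j f) x) ^ 2

/-- `⟨D²f ∇f, ∇f⟩ = ∑ i j, (∂²_{ij} f)(∂_i f)(∂_j f)`. -/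
def hessGrad (f : E2 → ℝ) (x : E2) : ℝ :=
  ∑ i, ∑ j, pd i (pd j f) x * pd i f x * pd j f x

end

lemma integral_pd_eq_zero (F : E2 → ℝ) (hF : ContDiff ℝ (⊤ : ℕ∞) F)
    (hFc : HasCompactSupport F) (i : Fin 2) : ∫ x : E2, pd i F x = 0 := by
  obtain ⟨R, hR0, hRsub⟩ : ∃ R : ℝ, 0 < R ∧ tsupport F ⊆ Metric.ball 0 R := by
    obtain ⟨R, hR⟩ := hFc.isBounded.subset_ball 0
    exact ⟨max R 1, by positivity, hR.trans (Metric.ball_subset_ball (le_max_left _ _))⟩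
  set b : ContDiffBump (0 : E2) := ⟨R, R + 1, hR0, by linarith⟩
  have hχ1 : ∀ x ∈ Metric.closedBall (0:E2) R, (b : E2 → ℝ) x = 1 :=
    fun x hx => b.one_of_mem_closedBall hx
  have hχc : HasCompactSupport (b : E2 → ℝ) := b.hasCompactSupport
  obtain ⟨D, hχlip⟩ := ContDiff.lipschitzWith_of_hasCompactSupport hχc
    (b.contDiff (n := (⊤:ℕ∞))) (by simp)
  obtain ⟨C, hFlip⟩ := ContDiff.lipschitzWith_of_hasCompactSupport hFc hF (by simp)
  have key := LipschitzWith.integral_lineDeriv_mul_eq hFlip hχlip hχc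
    (EuclideanSpace.single i 1) (μ := volume)
  have hFd : Differentiable ℝ F := hF.differentiable (by simp)
  have hL : ∀ x : E2, lineDeriv ℝ F x (EuclideanSpace.single i 1) * (b : E2 → ℝ) x
      = pd i F x := by
    intro x
    rw [(hFd x).lineDeriv_eq_fderiv]
    by_cases hx : x ∈ tsupport F
    · rw [hχ1 x (Metric.ball_subset_closedBall (hRsub hx)), mul_one]; rfl
    · have : fderiv ℝ F x = 0 := by
        have := support_fderiv_subset ℝ (f := F)
        by_contra h
        exact hx (this (by simpa using h))
      simp [pd, this]
  have hR2 : ∀ x : E2, lineDeriv ℝ (b : E2 → ℝ) x (-(EuclideanSpace.single i 1)) * F x = 0 := by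
    intro x
    by_cases hx : F x = 0
    · simp [hx]
    · have hxm : x ∈ Metric.ball (0:E2) R := hRsub (subset_tsupport F hx)
      have hev : (b : E2 → ℝ) =ᶠ[nhds x] (fun _ => 1) := by
        filter_upwards [Metric.ball_mem_nhds x (show (0:ℝ) < R - dist x 0 by
          simpa [sub_pos] using hxm)] with y hy
        apply hχ1
        have h1 : dist y x < R - dist x 0 := by simpa [Metric.mem_ball] using hy
        have h2 := dist_triangle y x 0
        simp only [Metric.mem_closedBall]
        linarith
      have : lineDeriv ℝ (b : E2 → ℝ) x (-(EuclideanSpace.single i 1))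
          = lineDeriv ℝ (fun _ : E2 => (1:ℝ)) x (-(EuclideanSpace.single i 1)) := by
        apply Filter.EventuallyEq.lineDeriv_eq hev
      rw [this]
      simp [lineDeriv]
  simp only [hL, hR2] at key
  simpa using key

lemma pd_contDiff {f : E2 → ℝ} (hf : ContDiff ℝ (⊤:ℕ∞) f) (i : Fin 2) :
    ContDiff ℝ (⊤:ℕ∞) (pd i f) :=
  (hf.fderiv_right (le_refl _)).clm_apply contDiff_const

lemma pd_compactSupport {f : E2 → ℝ} (hf : HasCompactSupport f) (i : Fin 2) :
    HasCompactSupport (pd i f) :=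
  (hf.fderiv ℝ).comp_left (g := fun L : E2 →L[ℝ] ℝ => L (EuclideanSpace.single i 1)) rfl

lemma pd_mul {f g : E2 → ℝ} {x : E2} (i : Fin 2) (hf : DifferentiableAt ℝ f x)
    (hg : DifferentiableAt ℝ g x) :
    pd i (fun y => f y * g y) x = pd i f x * g x + f x * pd i g x := by
  unfold pd
  rw [fderiv_fun_mul hf hg]
  simp
  ring

lemma pd_sum {f : Fin 2 → E2 → ℝ} {x : E2} (i : Fin 2)
    (hf : ∀ j, DifferentiableAt ℝ (f j) x) :
    pd i (fun y => ∑ j, f j y) x = ∑ j, pd i (f j) x := by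
  unfold pd
  rw [fderiv_fun_sum (fun j _ => hf j)]
  simp

lemma pd_sq {f : E2 → ℝ} {x : E2} (i : Fin 2) (hf : DifferentiableAt ℝ f x) :
    pd i (fun y => f y ^ 2) x = 2 * f x * pd i f x := by
  have : (fun y => f y ^ 2) = fun y => f y * f y := by funext y; ring
  rw [this, pd_mul i hf hf]; ring

lemma pd_inv {f : E2 → ℝ} {x : E2} (i : Fin 2) (hf : DifferentiableAt ℝ f x)
    (h0 : f x ≠ 0) :
    pd i (fun y => (f y)⁻¹) x = -(((f x)⁻¹) ^ 2) * pd i f x := by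
  have hcomp : (fun y => (f y)⁻¹) = (fun t : ℝ => t⁻¹) ∘ f := rfl
  unfold pd
  rw [hcomp, fderiv_comp x (differentiableAt_inv h0) hf]
  simp [fderiv_inv]
  ring

lemma pd_comm {f : E2 → ℝ} (hf : ContDiff ℝ (⊤:ℕ∞) f) (i j : Fin 2) (x : E2) :
    pd i (pd j f) x = pd j (pd i f) x := by
  have hd : Differentiable ℝ (fderiv ℝ f) :=
    (hf.fderiv_right (m := (⊤:ℕ∞)) (le_refl _)).differentiable (by simp)
  have key : ∀ a b : Fin 2,
      pd a (pd b f) x = fderiv ℝ (fderiv ℝ f) x (EuclideanSpace.single a 1)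
        (EuclideanSpace.single b 1) := by
    intro a b
    have h := ((ContinuousLinearMap.apply ℝ ℝ
      (EuclideanSpace.single b 1)).hasFDerivAt.comp x (hd x).hasFDerivAt).fderiv
    exact congrFun (congrArg DFunLike.coe h) (EuclideanSpace.single a 1)
  rw [key, key]
  exact second_derivative_symmetric (fun y => (hf.differentiable (by simp) y).hasFDerivAt)
    (hd x).hasFDerivAt _ _

lemma HCS_add {f g : E2 → ℝ} (hf : HasCompactSupport f) (hg : HasCompactSupport g) :
    HasCompactSupport (fun x => f x + g x) := hf.add hg

lemma HCS_mul_left {f g : E2 → ℝ} (hg : HasCompactSupport g) :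
    HasCompactSupport (fun x => f x * g x) := hg.mul_left

lemma HCS_mul_right {f g : E2 → ℝ} (hf : HasCompactSupport f) :
    HasCompactSupport (fun x => f x * g x) := hf.mul_right

lemma HCS_sq {f : E2 → ℝ} (hf : HasCompactSupport f) :
    HasCompactSupport (fun x => f x ^ 2) :=
  hf.comp_left (g := fun t : ℝ => t ^ 2) (by norm_num)

lemma Int_add {f g : E2 → ℝ} (hf : MeasureTheory.Integrable f) (hg : MeasureTheory.Integrable g) :
    MeasureTheory.Integrable (fun x => f x + g x) := hf.add hg

lemma Int_cmul {f : E2 → ℝ} (r : ℝ) (hf : MeasureTheory.Integrable f) :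
    MeasureTheory.Integrable (fun x => r * f x) := hf.const_mul r

set_option maxHeartbeats 4000000

/-- Equation (3.8): for `c = exp ∘ g` with `g` smooth and compactly supported,
`∫ c⁻² |∇c|² Δc = −(2/3) ∫ c⁻¹ |D²c|² + (2/3) ∫ c⁻³ |∇c|⁴ + (2/3) ∫ c⁻¹ (Δc)²`. -/
theorem stmt3 (g : E2 → ℝ) (hg : ContDiff ℝ (⊤ : ℕ∞) g) (hgc : HasCompactSupport g)
    (c : E2 → ℝ) (hc : c = fun x => Real.exp (g x)) :
    ∫ x : E2, gradSq c x * lap c x / (c x) ^ 2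
      = -(2 / 3) * (∫ x : E2, hessSq c x / c x)
        + (2 / 3) * (∫ x : E2, (gradSq c x) ^ 2 / (c x) ^ 3)
        + (2 / 3) * ∫ x : E2, (lap c x) ^ 2 / c x := by
  -- smoothness
  have hcs : ContDiff ℝ (⊤:ℕ∞) c := by rw [hc]; exact Real.contDiff_exp.comp hg
  have hne : ∀ x, c x ≠ 0 := by intro x; rw [hc]; exact (Real.exp_pos _).ne'
  have hdAt : ∀ {f : E2 → ℝ}, ContDiff ℝ (⊤:ℕ∞) f → ∀ x, DifferentiableAt ℝ f x :=
    fun hf x => (hf.differentiable (by simp)) x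
  have hc1 : ∀ i, ContDiff ℝ (⊤:ℕ∞) (pd i c) := fun i => pd_contDiff hcs i
  have hc2 : ∀ i j, ContDiff ℝ (⊤:ℕ∞) (pd i (pd j c)) := fun i j => pd_contDiff (hc1 j) i
  have hwc : ContDiff ℝ (⊤:ℕ∞) (fun y => (c y)⁻¹) := hcs.inv hne
  have hgrad_eq : gradSq c = fun y => ∑ i, pd i c y ^ 2 := rfl
  have hlap_eq : lap c = fun y => ∑ i, pd i (pd i c) y := rfl
  have hgradc : ContDiff ℝ (⊤:ℕ∞) (gradSq c) := by
    rw [hgrad_eq]; exact ContDiff.sum fun i _ => (hc1 i).pow 2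
  have hlapc : ContDiff ℝ (⊤:ℕ∞) (lap c) := by
    rw [hlap_eq]; exact ContDiff.sum fun i _ => hc2 i i
  have hhessSqc : ContDiff ℝ (⊤:ℕ∞) (hessSq c) := by
    have h : hessSq c = fun y => ∑ i, ∑ j, pd i (pd j c) y ^ 2 := rfl
    rw [h]; exact ContDiff.sum fun i _ => ContDiff.sum fun j _ => (hc2 i j).pow 2
  have hhessGradc : ContDiff ℝ (⊤:ℕ∞) (hessGrad c) := by
    have h : hessGrad c = fun y => ∑ i, ∑ j, pd i (pd j c) y * pd i c y * pd j c y := rfl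
    rw [h]
    exact ContDiff.sum fun i _ => ContDiff.sum fun j _ => ((hc2 i j).mul (hc1 i)).mul (hc1 j)
  have hGNin : ContDiff ℝ (⊤:ℕ∞) (fun y => ∑ i, pd i (lap c) y * pd i c y) :=
    ContDiff.sum fun i _ => (pd_contDiff hlapc i).mul (hc1 i)
  have hF3in : ∀ j, ContDiff ℝ (⊤:ℕ∞) (fun y => ∑ i, pd i c y * pd i (pd j c) y) :=
    fun j => ContDiff.sum fun i _ => (hc1 i).mul (hc2 i j)
  -- compact supports
  have hh : HasCompactSupport (fun x => c x - 1) := by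
    rw [hc]
    exact hgc.comp_left (g := fun t : ℝ => Real.exp t - 1) (by simp)
  have hS1 : ∀ i, HasCompactSupport (pd i c) := by
    intro i
    have : pd i c = pd i (fun x => c x - 1) := by
      funext x; unfold pd; rw [fderiv_sub_const]
    rw [this]; exact pd_compactSupport hh i
  have hS2 : ∀ i j, HasCompactSupport (pd i (pd j c)) := fun i j => pd_compactSupport (hS1 j) i
  have sGrad : HasCompactSupport (gradSq c) := by
    have h : gradSq c = fun y => pd 0 c y ^ 2 + pd 1 c y ^ 2 := by
      funext y; exact Fin.sum_univ_two _
    rw [h]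
    exact HCS_add (HCS_sq (hS1 0)) (HCS_sq (hS1 1))
  have sLap : HasCompactSupport (lap c) := by
    have h : lap c = fun y => pd 0 (pd 0 c) y + pd 1 (pd 1 c) y := by
      funext y; exact Fin.sum_univ_two _
    rw [h]
    exact HCS_add (hS2 0 0) (hS2 1 1)
  have sHessSq : HasCompactSupport (hessSq c) := by
    have h : hessSq c = fun y => (pd 0 (pd 0 c) y ^ 2 + pd 0 (pd 1 c) y ^ 2)
        + (pd 1 (pd 0 c) y ^ 2 + pd 1 (pd 1 c) y ^ 2) := by
      funext y
      simp [hessSq, Fin.sum_univ_two]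
    rw [h]
    exact HCS_add (HCS_add (HCS_sq (hS2 0 0)) (HCS_sq (hS2 0 1)))
      (HCS_add (HCS_sq (hS2 1 0)) (HCS_sq (hS2 1 1)))
  have sHessGrad : HasCompactSupport (hessGrad c) := by
    have h : hessGrad c = fun y =>
        (pd 0 (pd 0 c) y * pd 0 c y * pd 0 c y + pd 0 (pd 1 c) y * pd 0 c y * pd 1 c y)
        + (pd 1 (pd 0 c) y * pd 1 c y * pd 0 c y + pd 1 (pd 1 c) y * pd 1 c y * pd 1 c y) := by
      funext y
      simp [hessGrad, Fin.sum_univ_two]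
    rw [h]
    exact HCS_add (HCS_add (HCS_mul_right (HCS_mul_right (hS2 0 0)))
        (HCS_mul_right (HCS_mul_right (hS2 0 1))))
      (HCS_add (HCS_mul_right (HCS_mul_right (hS2 1 0)))
        (HCS_mul_right (HCS_mul_right (hS2 1 1))))
  have sGNin : HasCompactSupport (fun y => ∑ i, pd i (lap c) y * pd i c y) := by
    have h : (fun y => ∑ i, pd i (lap c) y * pd i c y)
        = fun y => pd 0 (lap c) y * pd 0 c y + pd 1 (lap c) y * pd 1 c y := by
      funext y; exact Fin.sum_univ_two _
    rw [h]
    exact HCS_add (HCS_mul_left (hS1 0)) (HCS_mul_left (hS1 1))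
  have sF3in : ∀ j, HasCompactSupport (fun y => ∑ i, pd i c y * pd i (pd j c) y) := by
    intro j
    have h : (fun y => ∑ i, pd i c y * pd i (pd j c) y)
        = fun y => pd 0 c y * pd 0 (pd j c) y + pd 1 c y * pd 1 (pd j c) y := by
      funext y; exact Fin.sum_univ_two _
    rw [h]
    exact HCS_add (HCS_mul_left (hS2 0 j)) (HCS_mul_left (hS2 1 j))
  -- integrability of the six basic integrands
  have iI : Integrable (fun x : E2 => (c x)⁻¹ ^ 2 * (gradSq c x * lap c x)) :=
    (((hwc.pow 2).mul (hgradc.mul hlapc)).continuous).integrable_of_hasCompactSupport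
      (HCS_mul_left (HCS_mul_right sGrad))
  have iJ : Integrable (fun x : E2 => (c x)⁻¹ * hessSq c x) :=
    ((hwc.mul hhessSqc).continuous).integrable_of_hasCompactSupport (HCS_mul_left sHessSq)
  have iK : Integrable (fun x : E2 => (c x)⁻¹ ^ 3 * gradSq c x ^ 2) :=
    (((hwc.pow 3).mul (hgradc.pow 2)).continuous).integrable_of_hasCompactSupport
      (HCS_mul_left (HCS_sq sGrad))
  have iL : Integrable (fun x : E2 => (c x)⁻¹ * lap c x ^ 2) :=
    ((hwc.mul (hlapc.pow 2)).continuous).integrable_of_hasCompactSupport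
      (HCS_mul_left (HCS_sq sLap))
  have iM : Integrable (fun x : E2 => (c x)⁻¹ ^ 2 * hessGrad c x) :=
    (((hwc.pow 2).mul hhessGradc).continuous).integrable_of_hasCompactSupport
      (HCS_mul_left sHessGrad)
  have iN : Integrable (fun x : E2 => (c x)⁻¹ * ∑ i, pd i (lap c) x * pd i c x) :=
    ((hwc.mul hGNin).continuous).integrable_of_hasCompactSupport (HCS_mul_left sGNin)
  -- pointwise derivative rules
  have pd_w : ∀ (j : Fin 2) (x : E2),
      pd j (fun y => (c y)⁻¹) x = -((c x)⁻¹ ^ 2) * pd j c x :=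
    fun j x => pd_inv j (hdAt hcs x) (hne x)
  have pd_gradSq : ∀ (j : Fin 2) (x : E2),
      pd j (gradSq c) x = ∑ i, 2 * pd i c x * pd j (pd i c) x := by
    intro j x
    rw [hgrad_eq, pd_sum j (fun i => hdAt ((hc1 i).pow 2) x)]
    exact Finset.sum_congr rfl fun i _ => pd_sq j (hdAt (hc1 i) x)
  have pd_lap : ∀ (j : Fin 2) (x : E2),
      pd j (lap c) x = ∑ i, pd j (pd i (pd i c)) x := by
    intro j x
    rw [hlap_eq, pd_sum j (fun i => hdAt (hc2 i i) x)]
  -- the three divergence identities, pointwise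
  have P1 : ∀ x : E2, (pd 0 (fun y => (c y)⁻¹ ^ 2 * gradSq c y * pd 0 c y) x
        + pd 1 (fun y => (c y)⁻¹ ^ 2 * gradSq c y * pd 1 c y) x)
      = (-2) * ((c x)⁻¹ ^ 3 * gradSq c x ^ 2)
        + (2 * ((c x)⁻¹ ^ 2 * hessGrad c x)
          + (c x)⁻¹ ^ 2 * (gradSq c x * lap c x)) := by
    intro x
    rw [pd_mul 0 (hdAt ((hwc.pow 2).mul hgradc) x) (hdAt (hc1 0) x),
        pd_mul 1 (hdAt ((hwc.pow 2).mul hgradc) x) (hdAt (hc1 1) x),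
        pd_mul 0 (hdAt (hwc.pow 2) x) (hdAt hgradc x),
        pd_mul 1 (hdAt (hwc.pow 2) x) (hdAt hgradc x),
        pd_sq 0 (hdAt hwc x), pd_sq 1 (hdAt hwc x),
        pd_w 0 x, pd_w 1 x, pd_gradSq 0 x, pd_gradSq 1 x]
    simp only [gradSq, lap, hessGrad, Fin.sum_univ_two]
    rw [pd_comm hcs 1 0 x]
    ring
  have P2 : ∀ x : E2, (pd 0 (fun y => (c y)⁻¹ * lap c y * pd 0 c y) x
        + pd 1 (fun y => (c y)⁻¹ * lap c y * pd 1 c y) x)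
      = (-1) * ((c x)⁻¹ ^ 2 * (gradSq c x * lap c x))
        + (((c x)⁻¹ * ∑ i, pd i (lap c) x * pd i c x)
          + (c x)⁻¹ * lap c x ^ 2) := by
    intro x
    rw [pd_mul 0 (hdAt (hwc.mul hlapc) x) (hdAt (hc1 0) x),
        pd_mul 1 (hdAt (hwc.mul hlapc) x) (hdAt (hc1 1) x),
        pd_mul 0 (hdAt hwc x) (hdAt hlapc x),
        pd_mul 1 (hdAt hwc x) (hdAt hlapc x),
        pd_w 0 x, pd_w 1 x]
    simp only [gradSq, lap, Fin.sum_univ_two]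
    ring
  have P3 : ∀ x : E2,
      (pd 0 (fun y => (c y)⁻¹ * ∑ i, pd i c y * pd i (pd 0 c) y) x
        + pd 1 (fun y => (c y)⁻¹ * ∑ i, pd i c y * pd i (pd 1 c) y) x)
      = (-1) * ((c x)⁻¹ ^ 2 * hessGrad c x)
        + (((c x)⁻¹ * hessSq c x)
          + ((c x)⁻¹ * ∑ i, pd i (lap c) x * pd i c x)) := by
    intro x
    rw [pd_mul 0 (hdAt hwc x) (hdAt (hF3in 0) x),
        pd_mul 1 (hdAt hwc x) (hdAt (hF3in 1) x),
        pd_sum 0 (fun i => hdAt ((hc1 i).mul (hc2 i 0)) x),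
        pd_sum 1 (fun i => hdAt ((hc1 i).mul (hc2 i 1)) x)]
    simp only [Fin.sum_univ_two]
    rw [pd_mul 0 (hdAt (hc1 0) x) (hdAt (hc2 0 0) x),
        pd_mul 0 (hdAt (hc1 1) x) (hdAt (hc2 1 0) x),
        pd_mul 1 (hdAt (hc1 0) x) (hdAt (hc2 0 1) x),
        pd_mul 1 (hdAt (hc1 1) x) (hdAt (hc2 1 1) x),
        pd_w 0 x, pd_w 1 x, pd_lap 0 x, pd_lap 1 x]
    simp only [gradSq, hessSq, hessGrad, Fin.sum_univ_two]
    rw [pd_comm hcs 1 0 x, pd_comm (hc1 0) 0 1 x, pd_comm (hc1 1) 1 0 x]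
    ring
  -- divergence theorem: each field integrates to zero
  have div_zero : ∀ (F : Fin 2 → E2 → ℝ), (∀ j, ContDiff ℝ (⊤:ℕ∞) (F j)) →
      (∀ j, HasCompactSupport (F j)) →
      (∫ x : E2, ∑ j, pd j (F j) x) = 0 := by
    intro F hFs hFc
    rw [integral_finset_sum _ (fun j _ =>
      ((pd_contDiff (hFs j) j).continuous).integrable_of_hasCompactSupport
        (pd_compactSupport (hFc j) j))]
    exact Finset.sum_eq_zero fun j _ => integral_pd_eq_zero _ (hFs j) (hFc j) j
  have div1 : (∫ x : E2, ∑ j, pd j (fun y => (c y)⁻¹ ^ 2 * gradSq c y * pd j c y) x) = 0 :=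
    div_zero _ (fun j => ((hwc.pow 2).mul hgradc).mul (hc1 j)) (fun j => HCS_mul_left (hS1 j))
  have div2 : (∫ x : E2, ∑ j, pd j (fun y => (c y)⁻¹ * lap c y * pd j c y) x) = 0 :=
    div_zero _ (fun j => (hwc.mul hlapc).mul (hc1 j)) (fun j => HCS_mul_left (hS1 j))
  have div3 : (∫ x : E2,
      ∑ j, pd j (fun y => (c y)⁻¹ * ∑ i, pd i c y * pd i (pd j c) y) x) = 0 :=
    div_zero _ (fun j => hwc.mul (hF3in j)) (fun j => HCS_mul_left (sF3in j))
  -- convert to integral identities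
  have eq1 : (0:ℝ) = (-2) * (∫ x : E2, (c x)⁻¹ ^ 3 * gradSq c x ^ 2)
      + (2 * (∫ x : E2, (c x)⁻¹ ^ 2 * hessGrad c x)
        + (∫ x : E2, (c x)⁻¹ ^ 2 * (gradSq c x * lap c x))) := by
    rw [← div1, show (fun x : E2 => ∑ j, pd j (fun y => (c y)⁻¹ ^ 2 * gradSq c y * pd j c y) x)
      = _ from funext fun x => (Fin.sum_univ_two _).trans (P1 x)]
    rw [integral_add (Int_cmul (-2) iK) (Int_add (Int_cmul 2 iM) iI),
        integral_add (Int_cmul 2 iM) iI, integral_const_mul, integral_const_mul]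
  have eq2 : (0:ℝ) = (-1) * (∫ x : E2, (c x)⁻¹ ^ 2 * (gradSq c x * lap c x))
      + ((∫ x : E2, (c x)⁻¹ * ∑ i, pd i (lap c) x * pd i c x)
        + (∫ x : E2, (c x)⁻¹ * lap c x ^ 2)) := by
    rw [← div2, show (fun x : E2 => ∑ j, pd j (fun y => (c y)⁻¹ * lap c y * pd j c y) x)
      = _ from funext fun x => (Fin.sum_univ_two _).trans (P2 x)]
    rw [integral_add (Int_cmul (-1) iI) (Int_add iN iL), integral_add iN iL, integral_const_mul]
  have eq3 : (0:ℝ) = (-1) * (∫ x : E2, (c x)⁻¹ ^ 2 * hessGrad c x)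
      + ((∫ x : E2, (c x)⁻¹ * hessSq c x)
        + (∫ x : E2, (c x)⁻¹ * ∑ i, pd i (lap c) x * pd i c x)) := by
    rw [← div3, show (fun x : E2 =>
        ∑ j, pd j (fun y => (c y)⁻¹ * ∑ i, pd i c y * pd i (pd j c) y) x)
      = _ from funext fun x => (Fin.sum_univ_two _).trans (P3 x)]
    rw [integral_add (Int_cmul (-1) iM) (Int_add iJ iN), integral_add iJ iN, integral_const_mul]
  -- rewrite the goal integrands in the canonical form
  rw [show (fun x : E2 => gradSq c x * lap c x / c x ^ 2)
      = fun x : E2 => (c x)⁻¹ ^ 2 * (gradSq c x * lap c x) from funext fun x => by ring,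
    show (fun x : E2 => hessSq c x / c x) = fun x : E2 => (c x)⁻¹ * hessSq c x from
      funext fun x => by ring,
    show (fun x : E2 => gradSq c x ^ 2 / c x ^ 3) = fun x : E2 => (c x)⁻¹ ^ 3 * gradSq c x ^ 2
      from funext fun x => by ring,
    show (fun x : E2 => lap c x ^ 2 / c x) = fun x : E2 => (c x)⁻¹ * lap c x ^ 2 from
      funext fun x => by ring]
  linarith [eq1, eq2, eq3]
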